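/- Let d ≥ 2 and let (a_{i,j}), (b_{i,j}) be d × d anti-Latin squares over Z_d. Let M, L be independent uniform on Z_d, Y_1 = L, Y_2 = M + L, Y_3 = a_{Y_1, Y_2}, Y_4 = b_{Y_1, Y_2}. Then for each i ∈ {1,2} and j ∈ {3,4}, there is no function f : Z_d × Z_d → Z_d with f(Y_i, Y_j) = M almost surely. -/
import Mathlib


/-- A `d × d` matrix over `Z_d` (given as a function) is an anti-Latin square if
every row has a repeated entry and every column has a repeated entry. -/
def IsAntiLatin {d : ℕ} (A : ZMod d → ZMod d → ZMod d) : Prop :=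
  (∀ i : ZMod d, ∃ j j' : ZMod d, j ≠ j' ∧ A i j = A i j') ∧
  (∀ j : ZMod d, ∃ i i' : ZMod d, i ≠ i' ∧ A i j = A i' j)

/-- Any anti-Latin code is imperfectly secret against deterministic passive
attacks: with `Y₁ = L`, `Y₂ = M + L`, `Y₃ = a_{Y₁,Y₂}`, `Y₄ = b_{Y₁,Y₂}`, for each
`i ∈ {1,2}`, `j ∈ {3,4}` there is no function `f` with `f(Y_i, Y_j) = M` for all
values of `(M, L)` (i.e. almost surely under the uniform distribution). -/
theorem antiLatin_code_imperfectly_secret (d : ℕ) (hd : 2 ≤ d)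
    (a b : ZMod d → ZMod d → ZMod d) (ha : IsAntiLatin a) (hb : IsAntiLatin b) :
    (¬ ∃ f : ZMod d → ZMod d → ZMod d, ∀ M L : ZMod d, f L (a L (M + L)) = M) ∧
    (¬ ∃ f : ZMod d → ZMod d → ZMod d, ∀ M L : ZMod d, f L (b L (M + L)) = M) ∧
    (¬ ∃ f : ZMod d → ZMod d → ZMod d, ∀ M L : ZMod d, f (M + L) (a L (M + L)) = M) ∧
    (¬ ∃ f : ZMod d → ZMod d → ZMod d, ∀ M L : ZMod d, f (M + L) (b L (M + L)) = M) := by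
  have row : ∀ A : ZMod d → ZMod d → ZMod d, IsAntiLatin A →
      ¬ ∃ f : ZMod d → ZMod d → ZMod d, ∀ M L : ZMod d, f L (A L (M + L)) = M := by
    rintro A hA ⟨f, hf⟩
    obtain ⟨j, j', hjj, hA0⟩ := hA.1 0
    have h1 := hf j 0
    have h2 := hf j' 0
    simp only [add_zero] at h1 h2
    rw [hA0] at h1
    exact hjj (h1.symm.trans h2)
  have col : ∀ A : ZMod d → ZMod d → ZMod d, IsAntiLatin A →
      ¬ ∃ f : ZMod d → ZMod d → ZMod d, ∀ M L : ZMod d, f (M + L) (A L (M + L)) = M := by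
    rintro A hA ⟨f, hf⟩
    obtain ⟨i, i', hii, hA0⟩ := hA.2 0
    have h1 := hf (0 - i) i
    have h2 := hf (0 - i') i'
    rw [sub_add_cancel] at h1 h2
    rw [hA0] at h1
    rw [h1] at h2
    exact hii (by linear_combination -h2)
  exact ⟨row a ha, row b hb, col a ha, col b hb⟩
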